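/- The chromatic threshold of the family of S(7)-free 3-uniform hypergraphs is at least 9/17, where S(7) denotes the Fano plane; that is, for every t ≥ 2 and ε > 0 there exist arbitrarily large S(7)-free 3-uniform hypergraphs H with χ(H) ≥ t and δ(H) ≥ (9/17 − ε)·C(|V(H)|, 2). -/

import Mathlib

open Finset

/-- `A` embeds into `B` (i.e. `B` contains a copy of `A`). -/
def Embeds {α β : Type} [DecidableEq β] (A : Finset (Finset α)) (B : Finset (Finset β)) : Prop :=
  ∃ f : α → β, Function.Injective f ∧ ∀ e ∈ A, e.image f ∈ B

/-- The chromatic number of the hypergraph with edge set `A` is at most `K`. -/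
def ChromAtMost {α : Type} (A : Finset (Finset α)) (K : ℕ) : Prop :=
  ∃ f : α → Fin K, ∀ e ∈ A, ∃ x ∈ e, ∃ y ∈ e, f x ≠ f y

/-- The Fano plane `S(7)`: the `3`-uniform hypergraph on `7` vertices whose edges are the
lines of the projective plane of order `2`. -/
def Fano : Finset (Finset (Fin 7)) :=
  {{0, 1, 2}, {0, 3, 4}, {0, 5, 6}, {1, 3, 5}, {1, 4, 6}, {2, 3, 6}, {2, 4, 5}}

namespace FanoCT

def nn (N K : ℕ) : ℕ := N*N + 3*K

def lab (N K : ℕ) (v : Fin (nn N K)) : Fin 4 :=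
  if (v:ℕ) < N*N ∧ (v:ℕ) / N < (v:ℕ) % N then 3 else ⟨(v:ℕ) % 3, by omega⟩

def chainS (N : ℕ) (s : Finset ℕ) : Prop :=
  ∃ i j k l : Fin N, (i:ℕ) < (j:ℕ) ∧ (j:ℕ) < (k:ℕ) ∧ (k:ℕ) < (l:ℕ) ∧
    s = {(i:ℕ)*N+(j:ℕ), (j:ℕ)*N+(k:ℕ), (k:ℕ)*N+(l:ℕ)}

instance (N : ℕ) : DecidablePred (chainS N) := fun _ => by unfold chainS; infer_instance

def cond (N K : ℕ) (e : Finset (Fin (nn N K))) : Prop :=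
  ((e.filter (fun v => lab N K v = 3)).card = 0 ∧ (∃ v ∈ e, lab N K v = 0) ∧
      (∃ v ∈ e, lab N K v = 1 ∨ lab N K v = 2))
  ∨ ((e.filter (fun v => lab N K v = 3)).card = 1 ∧
      ∃ x ∈ e, ∃ y ∈ e, lab N K x ≠ 3 ∧ lab N K y ≠ 3 ∧ lab N K x ≠ lab N K y)
  ∨ ((e.filter (fun v => lab N K v = 3)).card = 3 ∧ chainS N (e.image Fin.val))

instance (N K : ℕ) : DecidablePred (cond N K) := fun _ => by unfold cond; infer_instance

def G (N K : ℕ) : Finset (Finset (Fin (nn N K))) :=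
  (Finset.univ.powersetCard 3).filter (cond N K)

variable {N K : ℕ}

lemma mem_G_iff {e : Finset (Fin (nn N K))} : e ∈ G N K ↔ e.card = 3 ∧ cond N K e := by
  simp [G, Finset.mem_filter, Finset.mem_powersetCard_univ]

lemma lab_eq3_iff {v : Fin (nn N K)} :
    lab N K v = 3 ↔ ((v:ℕ) < N*N ∧ (v:ℕ) / N < (v:ℕ) % N) := by
  unfold lab; split_ifs with h
  · simp [h]
  · simp only [h, iff_false]
    intro hc
    have h3 : (v:ℕ) % 3 = 3 := Fin.val_eq_of_eq hc
    omega

lemma lab_val_of_not3 {v : Fin (nn N K)} (h : lab N K v ≠ 3) :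
    (lab N K v : ℕ) = (v:ℕ) % 3 := by
  unfold lab at *
  split_ifs at * with hc
  · exact absurd rfl h
  · rfl

lemma card3 {α : Type*} [DecidableEq α] {x y z : α} (hxy : x ≠ y) (hxz : x ≠ z) (hyz : y ≠ z) :
    ({x,y,z} : Finset α).card = 3 := by
  rw [card_insert_of_notMem (by simp [hxy, hxz]), card_insert_of_notMem (by simp [hyz]),
    card_singleton]

lemma filt3 {α : Type*} [DecidableEq α] (p : α → Prop) [DecidablePred p] {x y z : α}
    (hxy : x ≠ y) (hxz : x ≠ z) (hyz : y ≠ z) :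
    (({x,y,z} : Finset α).filter p).card =
      (if p x then 1 else 0) + (if p y then 1 else 0) + (if p z then 1 else 0) := by
  rw [show ({x,y,z} : Finset α) = insert x (insert y {z}) from rfl]
  rw [filter_insert, filter_insert, filter_singleton]
  split_ifs <;>
    simp_all [card_insert_of_notMem, mem_insert, mem_singleton, mem_filter, hxy, hxz, hyz]


-- encode/decode
lemma enc_lt_sq {i j : ℕ} (hi : i < N) (hj : j < N) : i*N + j < N*N := by
  calc i*N + j < i*N + N := by omega
  _ = (i+1)*N := by ring
  _ ≤ N*N := Nat.mul_le_mul_right N hi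

lemma enc_div {i j : ℕ} (hj : j < N) : (i*N + j) / N = i := by
  have hN : 0 < N := by omega
  rw [mul_comm, Nat.mul_add_div hN, Nat.div_eq_of_lt hj, add_zero]

lemma enc_mod {i j : ℕ} (hj : j < N) : (i*N + j) % N = j := by
  rw [mul_comm, Nat.mul_add_mod, Nat.mod_eq_of_lt hj]

/-- the W-vertex encoding a pair `(i,j)` -/
def wenc (N K : ℕ) (i j : Fin N) : Fin (nn N K) :=
  ⟨(i:ℕ)*N + (j:ℕ), by
    have := enc_lt_sq (N := N) i.isLt j.isLt
    unfold nn; omega⟩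

lemma lab_wenc {i j : Fin N} (hij : (i:ℕ) < (j:ℕ)) : lab N K (wenc N K i j) = 3 := by
  rw [lab_eq3_iff]
  have h1 := enc_lt_sq (N := N) i.isLt j.isLt
  refine ⟨h1, ?_⟩
  rw [show ((wenc N K i j : Fin (nn N K)) : ℕ) = (i:ℕ)*N + (j:ℕ) from rfl,
    enc_div j.isLt, enc_mod j.isLt]
  exact hij

lemma wenc_inj {i j i' j' : Fin N} (h : wenc N K i j = wenc N K i' j') : i = i' ∧ j = j' := by
  have hval : (i:ℕ)*N + (j:ℕ) = (i':ℕ)*N + (j':ℕ) := Fin.val_eq_of_eq h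
  have h1 : (i:ℕ) = i' ∧ (j:ℕ) = j' := by
    constructor
    · rw [← enc_div (i := (i:ℕ)) j.isLt, ← enc_div (i := (i':ℕ)) j'.isLt, hval]
    · rw [← enc_mod (i := (i:ℕ)) j.isLt, ← enc_mod (i := (i':ℕ)) j'.isLt, hval]
  exact ⟨Fin.ext h1.1, Fin.ext h1.2⟩

-- edge lemmas
lemma edgeY {x y z : Fin (nn N K)} (hxy : x ≠ y) (hxz : x ≠ z) (hyz : y ≠ z)
    (h3x : lab N K x ≠ 3) (h3y : lab N K y ≠ 3) (h3z : lab N K z ≠ 3)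
    (h0 : lab N K x = 0 ∨ lab N K y = 0 ∨ lab N K z = 0)
    (h12 : (lab N K x = 1 ∨ lab N K x = 2) ∨ (lab N K y = 1 ∨ lab N K y = 2) ∨
      (lab N K z = 1 ∨ lab N K z = 2)) :
    ({x,y,z} : Finset (Fin (nn N K))) ∈ G N K := by
  rw [mem_G_iff]
  refine ⟨card3 hxy hxz hyz, Or.inl ⟨?_, ?_, ?_⟩⟩
  · rw [filt3 _ hxy hxz hyz, if_neg h3x, if_neg h3y, if_neg h3z]
  · rcases h0 with h|h|h
    exacts [⟨x, by simp, h⟩, ⟨y, by simp, h⟩, ⟨z, by simp, h⟩]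
  · rcases h12 with h|h|h
    exacts [⟨x, by simp, h⟩, ⟨y, by simp, h⟩, ⟨z, by simp, h⟩]

lemma edgeW {x y z : Fin (nn N K)} (h3x : lab N K x = 3)
    (h3y : lab N K y ≠ 3) (h3z : lab N K z ≠ 3) (hyz : lab N K y ≠ lab N K z) :
    ({x,y,z} : Finset (Fin (nn N K))) ∈ G N K := by
  have hxy : x ≠ y := fun h => h3y (h ▸ h3x)
  have hxz : x ≠ z := fun h => h3z (h ▸ h3x)
  have hyz' : y ≠ z := fun h => hyz (by rw [h])
  rw [mem_G_iff]
  refine ⟨card3 hxy hxz hyz', Or.inr (Or.inl ⟨?_, y, by simp, z, by simp, h3y, h3z, hyz⟩)⟩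
  rw [filt3 _ hxy hxz hyz', if_pos h3x, if_neg h3y, if_neg h3z]

lemma edgeC {i j k l : Fin N} (hij : (i:ℕ) < j) (hjk : (j:ℕ) < k) (hkl : (k:ℕ) < l) :
    ({wenc N K i j, wenc N K j k, wenc N K k l} : Finset (Fin (nn N K))) ∈ G N K := by
  have d1 : wenc N K i j ≠ wenc N K j k := by
    intro h; obtain ⟨h1, -⟩ := wenc_inj h; rw [h1] at hij; omega
  have d2 : wenc N K i j ≠ wenc N K k l := by
    intro h; obtain ⟨h1, -⟩ := wenc_inj h
    rw [h1] at hij; omega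
  have d3 : wenc N K j k ≠ wenc N K k l := by
    intro h; obtain ⟨h1, -⟩ := wenc_inj h; rw [h1] at hjk; omega
  have l1 := lab_wenc (K := K) hij
  have l2 := lab_wenc (K := K) hjk
  have l3 := lab_wenc (K := K) hkl
  rw [mem_G_iff]
  refine ⟨card3 d1 d2 d3, Or.inr (Or.inr ⟨?_, ?_⟩)⟩
  · rw [filt3 _ d1 d2 d3, if_pos l1, if_pos l2, if_pos l3]
  · rw [image_insert, image_insert, image_singleton]
    exact ⟨i, j, k, l, hij, hjk, hkl, rfl⟩


-- the canonical Y-subclasses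
def Z (N K : ℕ) (c : ℕ) : Finset (Fin (nn N K)) :=
  Finset.univ.filter (fun v => N*N ≤ (v:ℕ) ∧ (v:ℕ) % 3 = c)

def Yset (N K : ℕ) : Finset (Fin (nn N K)) :=
  Finset.univ.filter (fun v => lab N K v ≠ 3)

lemma lab_of_Z {c : ℕ} {v : Fin (nn N K)} (hv : v ∈ Z N K c) : (lab N K v : ℕ) = c := by
  simp only [Z, mem_filter, mem_univ, true_and] at hv
  have hne : ¬((v:ℕ) < N*N ∧ (v:ℕ) / N < (v:ℕ) % N) := by omega
  have h3 : lab N K v ≠ 3 := by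
    intro h; exact hne (lab_eq3_iff.mp h)
  rw [lab_val_of_not3 h3, hv.2]

lemma Z_subset_Y {c : ℕ} (hc : c < 3) : Z N K c ⊆ Yset N K := by
  intro v hv
  simp only [Yset, mem_filter, mem_univ, true_and]
  intro h3
  have h := lab_of_Z hv
  rw [h3] at h
  have h' : (3:ℕ) = c := h
  omega

lemma card_Z (hN3 : N % 3 = 0) {c : ℕ} (hc : c < 3) : (Z N K c).card = K := by
  have hm3 : (N*N) % 3 = 0 := by
    rw [Nat.mul_mod, hN3]
  have himg : Z N K c = (Finset.univ : Finset (Fin K)).image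
      (fun a : Fin K => (⟨N*N + 3*(a:ℕ) + c, by have := a.isLt; unfold nn; omega⟩ : Fin (nn N K))) := by
    ext v
    simp only [Z, mem_filter, mem_univ, true_and, mem_image]
    constructor
    · rintro ⟨h1, h2⟩
      have hlt : (v:ℕ) < N*N + 3*K := v.isLt
      refine ⟨⟨((v:ℕ) - N*N - c)/3, by omega⟩, ?_⟩
      apply Fin.ext
      simp only
      omega
    · rintro ⟨a, rfl⟩
      simp only
      omega
  rw [himg, Finset.card_image_of_injective _ ?_, card_univ, Fintype.card_fin]
  intro a b hab
  have := Fin.val_eq_of_eq hab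
  simp only at this
  exact Fin.ext (by omega)

lemma card_Y_lb : 3*K ≤ (Yset N K).card := by
  classical
  have hsplit := Finset.card_filter_add_card_filter_not
    (s := (Finset.univ : Finset (Fin (nn N K)))) (p := fun v => lab N K v ≠ 3)
  have hW : (Finset.univ.filter (fun v : Fin (nn N K) => ¬ lab N K v ≠ 3)).card ≤ N*N := by
    have hmap : ∀ v ∈ Finset.univ.filter (fun v : Fin (nn N K) => ¬ lab N K v ≠ 3),
        (v:ℕ) ∈ Finset.range (N*N) := by
      intro v hv
      simp only [mem_filter, not_not] at hv
      rw [lab_eq3_iff] at hv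
      simp [hv.2.1]
    have := Finset.card_le_card_of_injOn _ hmap (fun a _ b _ h => Fin.ext h)
    simpa using this
  have hcard : (Finset.univ : Finset (Fin (nn N K))).card = N*N + 3*K := by
    rw [Finset.card_univ, Fintype.card_fin]; rfl
  rw [Yset]
  omega


lemma lab_val_ne3 {v : Fin (nn N K)} (hv : lab N K v ≠ 3) : (lab N K v : ℕ) ≠ 3 := by
  intro h; exact hv (Fin.ext h)

lemma lab_eq_of_val {v : Fin (nn N K)} {c : ℕ} (hc : c < 4) (h : (lab N K v : ℕ) = c) :
    lab N K v = ⟨c, hc⟩ := Fin.ext h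

lemma degW {v : Fin (nn N K)} (hN3 : N % 3 = 0) (hv : lab N K v = 3) :
    K*K + (K*K + K*K) ≤ ((G N K).filter (fun e => v ∈ e)).card := by
  classical
  set S : Finset (Fin (nn N K) × Fin (nn N K)) :=
    ((Z N K 0) ×ˢ (Z N K 1)) ∪ (((Z N K 0) ×ˢ (Z N K 2)) ∪ ((Z N K 1) ×ˢ (Z N K 2))) with hS
  have hkey : ∀ p ∈ S, (lab N K p.1 : ℕ) < (lab N K p.2 : ℕ) ∧ (lab N K p.2 : ℕ) < 3 := by
    intro p hp
    simp only [hS, mem_union, mem_product] at hp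
    rcases hp with ⟨h1, h2⟩ | ⟨h1, h2⟩ | ⟨h1, h2⟩ <;>
      rw [lab_of_Z h1, lab_of_Z h2] <;> omega
  have hlab1 : ∀ p ∈ S, lab N K p.1 ≠ 3 := by
    intro p hp h
    have := (hkey p hp)
    rw [h] at this
    have h3 : ((3 : Fin 4) : ℕ) = 3 := rfl
    omega
  have hlab2 : ∀ p ∈ S, lab N K p.2 ≠ 3 := by
    intro p hp h
    have := (hkey p hp).2
    rw [h] at this
    have h3 : ((3 : Fin 4) : ℕ) = 3 := rfl
    omega
  have hne12 : ∀ p ∈ S, lab N K p.1 ≠ lab N K p.2 := by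
    intro p hp h
    have := (hkey p hp).1
    rw [h] at this
    omega
  have hnev : ∀ p ∈ S, p.1 ≠ v ∧ p.2 ≠ v := by
    intro p hp
    constructor
    · intro h; exact hlab1 p hp (h ▸ hv)
    · intro h; exact hlab2 p hp (h ▸ hv)
  have hmaps : ∀ p ∈ S, (insert v {p.1, p.2} : Finset (Fin (nn N K)))
      ∈ (G N K).filter (fun e => v ∈ e) := by
    intro p hp
    rw [mem_filter]
    exact ⟨edgeW hv (hlab1 p hp) (hlab2 p hp) (hne12 p hp), mem_insert_self _ _⟩
  have hinj : Set.InjOn (fun p : Fin (nn N K) × Fin (nn N K) => (insert v {p.1, p.2} : Finset (Fin (nn N K)))) S := by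
    intro p hp q hq h
    simp only at h
    have hvp : v ∉ ({p.1, p.2} : Finset (Fin (nn N K))) := by
      simp only [mem_insert, mem_singleton]
      push_neg
      exact ⟨fun hh => (hnev p hp).1 hh.symm, fun hh => (hnev p hp).2 hh.symm⟩
    have hvq : v ∉ ({q.1, q.2} : Finset (Fin (nn N K))) := by
      simp only [mem_insert, mem_singleton]
      push_neg
      exact ⟨fun hh => (hnev q hq).1 hh.symm, fun hh => (hnev q hq).2 hh.symm⟩
    have hpq : ({p.1, p.2} : Finset (Fin (nn N K))) = {q.1, q.2} := by
      rw [← Finset.erase_insert hvp, ← Finset.erase_insert hvq, h]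
    have hp1 : p.1 ∈ ({q.1, q.2} : Finset (Fin (nn N K))) := hpq ▸ (by simp)
    have hp2 : p.2 ∈ ({q.1, q.2} : Finset (Fin (nn N K))) := hpq ▸ (by simp)
    have hq1 : q.1 ∈ ({p.1, p.2} : Finset (Fin (nn N K))) := hpq ▸ (by simp)
    simp only [mem_insert, mem_singleton] at hp1 hp2 hq1
    have kp := hkey p hp
    have kq := hkey q hq
    rcases hp1 with h1 | h1
    · rcases hp2 with h2 | h2
      · rw [h1] at kp; rw [h2] at kp; omega
      · exact Prod.ext h1 h2
    · rcases hp2 with h2 | h2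
      · -- p.1 = q.2, p.2 = q.1 : label order contradiction
        rw [h1] at kp; rw [h2] at kp; omega
      · rw [h1] at kp; rw [h2] at kp; omega
  have hcard : S.card = K*K + (K*K + K*K) := by
    have d1 : Disjoint ((Z N K 0) ×ˢ (Z N K 1))
        (((Z N K 0) ×ˢ (Z N K 2)) ∪ ((Z N K 1) ×ˢ (Z N K 2))) := by
      rw [Finset.disjoint_left]
      intro p hp hp'
      simp only [mem_product, mem_union] at hp hp'
      rcases hp' with ⟨-, h2⟩ | ⟨h1, -⟩
      · have a := lab_of_Z hp.2; have b := lab_of_Z h2; omega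
      · have a := lab_of_Z hp.1; have b := lab_of_Z h1; omega
    have d2 : Disjoint ((Z N K 0) ×ˢ (Z N K 2)) ((Z N K 1) ×ˢ (Z N K 2)) := by
      rw [Finset.disjoint_left]
      intro p hp hp'
      simp only [mem_product] at hp hp'
      have a := lab_of_Z hp.1; have b := lab_of_Z hp'.1; omega
    rw [hS, Finset.card_union_of_disjoint d1, Finset.card_union_of_disjoint d2]
    rw [Finset.card_product, Finset.card_product, Finset.card_product]
    rw [card_Z hN3 (by omega), card_Z hN3 (by omega), card_Z hN3 (by omega)]
  calc K*K + (K*K + K*K) = S.card := hcard.symm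
  _ ≤ ((G N K).filter (fun e => v ∈ e)).card := Finset.card_le_card_of_injOn _ hmaps hinj


lemma degY {v : Fin (nn N K)} (hN3 : N % 3 = 0) (hv : lab N K v ≠ 3) :
    ((Yset N K).card - 1).choose 2 ≤ ((G N K).filter (fun e => v ∈ e)).card
      + ((Yset N K).card - 1 - K).choose 2 := by
  classical
  have hlv : (lab N K v : ℕ) < 4 := (lab N K v).isLt
  have hlv3 : (lab N K v : ℕ) ≠ 3 := lab_val_ne3 hv
  set d : ℕ := if (lab N K v : ℕ) = 0 then 1 else 0 with hd
  have hd3 : d < 3 := by rw [hd]; split_ifs <;> omega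
  have hdne : d ≠ (lab N K v : ℕ) := by rw [hd]; split_ifs with h <;> omega
  set A : Finset (Fin (nn N K)) := (Yset N K).erase v with hA
  set SV : Finset (Finset (Fin (nn N K))) :=
    (A.powersetCard 2).filter (fun s => ∃ p ∈ s, p ∈ Z N K d) with hSV
  have hvY : v ∈ Yset N K := by simp [Yset, hv]
  -- SV.card ≤ degree
  have hmaps : ∀ s ∈ SV, (insert v s : Finset (Fin (nn N K)))
      ∈ (G N K).filter (fun e => v ∈ e) := by
    intro s hs
    simp only [hSV, mem_filter, Finset.mem_powersetCard] at hs
    obtain ⟨⟨hsub, hcard2⟩, p, hps, hpZ⟩ := hs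
    obtain ⟨x, y, hxy, rfl⟩ := Finset.card_eq_two.mp hcard2
    have hxA : x ∈ A := hsub (by simp)
    have hyA : y ∈ A := hsub (by simp)
    have hxv : x ≠ v := Finset.ne_of_mem_erase hxA
    have hyv : y ≠ v := Finset.ne_of_mem_erase hyA
    have hxY : lab N K x ≠ 3 := by
      have := Finset.mem_of_mem_erase hxA; simp only [Yset, mem_filter] at this
      exact this.2
    have hyY : lab N K y ≠ 3 := by
      have := Finset.mem_of_mem_erase hyA; simp only [Yset, mem_filter] at this
      exact this.2
    have hpd : (lab N K p : ℕ) = d := lab_of_Z hpZ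
    have hpxy : p = x ∨ p = y := by
      simp only [mem_insert, mem_singleton] at hps; exact hps
    rw [mem_filter]
    constructor
    · -- {v,x,y} ∈ G
      apply edgeY (fun h => hxv h.symm) (fun h => hyv h.symm) hxy hv hxY hyY
      · -- some label 0
        by_cases h0 : (lab N K v : ℕ) = 0
        · exact Or.inl (lab_eq_of_val (by omega) h0)
        · -- then d = 0 and p has label 0
          have hd0 : d = 0 := by rw [hd, if_neg h0]
          rw [hd0] at hpd
          rcases hpxy with rfl | rfl
          · exact Or.inr (Or.inl (lab_eq_of_val (by omega) hpd))
          · exact Or.inr (Or.inr (lab_eq_of_val (by omega) hpd))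
      · -- some label in {1,2}
        by_cases h0 : (lab N K v : ℕ) = 0
        · have hd1 : d = 1 := by rw [hd, if_pos h0]
          rw [hd1] at hpd
          rcases hpxy with rfl | rfl
          · exact Or.inr (Or.inl (Or.inl (lab_eq_of_val (by omega) hpd)))
          · exact Or.inr (Or.inr (Or.inl (lab_eq_of_val (by omega) hpd)))
        · rcases (by omega : (lab N K v : ℕ) = 1 ∨ (lab N K v : ℕ) = 2) with h | h
          · exact Or.inl (Or.inl (lab_eq_of_val (by omega) h))
          · exact Or.inl (Or.inr (lab_eq_of_val (by omega) h))
    · exact mem_insert_self _ _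
  have hinj : Set.InjOn (fun s : Finset (Fin (nn N K)) => insert v s) SV := by
    intro s hs s' hs' h
    have hs1 : s ∈ SV := hs
    have hs1' : s' ∈ SV := hs'
    simp only [hSV, mem_filter, Finset.mem_powersetCard] at hs1 hs1'
    have hv1 : v ∉ s := fun hc => (Finset.mem_erase.mp (hs1.1.1 hc)).1 rfl
    have hv2 : v ∉ s' := fun hc => (Finset.mem_erase.mp (hs1'.1.1 hc)).1 rfl
    rw [← Finset.erase_insert hv1, ← Finset.erase_insert hv2]
    simp only at h
    rw [h]
  have hcount1 : SV.card ≤ ((G N K).filter (fun e => v ∈ e)).card :=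
    Finset.card_le_card_of_injOn _ hmaps hinj
  -- complement identity
  have hcompl : (A.powersetCard 2).filter (fun s => ¬ ∃ p ∈ s, p ∈ Z N K d)
      = (A \ Z N K d).powersetCard 2 := by
    ext s
    simp only [mem_filter, Finset.mem_powersetCard, Finset.subset_sdiff,
      Finset.disjoint_left]
    constructor
    · rintro ⟨⟨h1, h2⟩, h3⟩
      push_neg at h3
      exact ⟨⟨h1, h3⟩, h2⟩
    · rintro ⟨⟨h1, h3⟩, h2⟩
      refine ⟨⟨h1, h2⟩, ?_⟩
      push_neg
      exact h3
  have hsplit := Finset.card_filter_add_card_filter_not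
    (s := A.powersetCard 2) (p := fun s => ∃ p ∈ s, p ∈ Z N K d)
  rw [hcompl] at hsplit
  have hZA : Z N K d ⊆ A := by
    rw [hA, Finset.subset_erase]
    refine ⟨Z_subset_Y hd3, ?_⟩
    intro hvZ
    exact hdne (lab_of_Z hvZ).symm
  have hcardA : A.card = (Yset N K).card - 1 := Finset.card_erase_of_mem hvY
  have hcardAZ : (A \ Z N K d).card = (Yset N K).card - 1 - K := by
    rw [Finset.card_sdiff_of_subset hZA, hcardA, card_Z hN3 hd3]
  have e1 : (A.powersetCard 2).card = ((Yset N K).card - 1).choose 2 := by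
    rw [Finset.card_powersetCard, hcardA]
  have e2 : ((A \ Z N K d).powersetCard 2).card = ((Yset N K).card - 1 - K).choose 2 := by
    rw [Finset.card_powersetCard, hcardAZ]
  have hfinal : SV.card + ((Yset N K).card - 1 - K).choose 2 = ((Yset N K).card - 1).choose 2 := by
    rw [← e1, ← e2]; exact hsplit
  omega


lemma two_choose (m : ℕ) : 2 * m.choose 2 = m * (m-1) := by
  rw [Nat.choose_two_right]
  have h2 : 2 ∣ m * (m-1) := by
    rcases Nat.even_or_odd m with h | h
    · exact Dvd.dvd.mul_right h.two_dvd _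
    · cases m with
      | zero => simp
      | succ k =>
        have hk : Even ((k+1) - 1) := by
          simpa using (Nat.Odd.sub_odd h odd_one)
        exact Dvd.dvd.mul_left hk.two_dvd _
  omega

lemma intIneqW (B K n1 : ℤ) (hB : 9 ≤ B) (hK : 10000*B ≤ K) (hn1 : n1 + 1 = B + 3*K)
    (hn0 : 0 ≤ n1) : 9*((n1+1)*n1) ≤ 102*(K*K) := by
  have hK0 : (0:ℤ) ≤ K := by nlinarith
  nlinarith [mul_nonneg hK0 (show (0:ℤ) ≤ K - 54*B by nlinarith),
    mul_nonneg (show (0:ℤ) ≤ K - 3*B by nlinarith) (show (0:ℤ) ≤ K + 3*B by nlinarith),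
    mul_nonneg hK0 hK0]

lemma intIneqY (B K n1 z1 : ℤ) (hB : 9 ≤ B) (hK : 10000*B ≤ K) (hn1 : n1 + 1 = B + 3*K)
    (hn0 : 0 ≤ n1) (hz1 : 2*K ≤ z1 + 2) (hz0 : 0 ≤ z1) :
    9*((n1+1)*n1) ≤ 17*(K*(2*z1+1+K)) := by
  have hK0 : (0:ℤ) ≤ K := by nlinarith
  nlinarith [mul_nonneg hK0 (show (0:ℤ) ≤ K - 51 by nlinarith),
    mul_nonneg hK0 (show (0:ℤ) ≤ K - 54*B by nlinarith),
    mul_nonneg (show (0:ℤ) ≤ K - 3*B by nlinarith) (show (0:ℤ) ≤ K + 3*B by nlinarith),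
    mul_nonneg hK0 (show (0:ℤ) ≤ z1 + 2 - 2*K by nlinarith)]

lemma arithW {B K : ℕ} (hB : 9 ≤ B) (hK : 10000*B ≤ K) :
    9 * (B + 3*K).choose 2 ≤ 17 * (K*K + (K*K + K*K)) := by
  obtain ⟨n1, hn1⟩ : ∃ n1, B + 3*K = n1 + 1 := ⟨B + 3*K - 1, by omega⟩
  have c1' : 2 * (B + 3*K).choose 2 = (n1+1) * n1 := by
    have := two_choose (B + 3*K); rw [hn1] at this ⊢
    simpa using this
  have key : 9 * ((n1+1) * n1) ≤ 102*(K*K) := by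
    exact_mod_cast intIneqW (B:ℤ) (K:ℤ) (n1:ℤ) (by exact_mod_cast hB)
      (by exact_mod_cast hK) (by exact_mod_cast hn1.symm) (by positivity)
  omega

lemma arithY {B K y : ℕ} (hB : 9 ≤ B) (hK : 10000*B ≤ K) (hy : 3*K ≤ y) :
    9 * (B + 3*K).choose 2 + 17 * (y-1-K).choose 2 ≤ 17 * (y-1).choose 2 := by
  have hKpos : 90000 ≤ K := by nlinarith
  obtain ⟨n1, hn1⟩ : ∃ n1, B + 3*K = n1 + 1 := ⟨B + 3*K - 1, by omega⟩
  obtain ⟨z1, hz1, hz1b⟩ : ∃ z1, y - 1 - K = z1 + 1 ∧ 2*K ≤ z1 + 2 := by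
    refine ⟨y - 2 - K, by omega, by omega⟩
  have hw : y - 1 = (z1 + 1) + K := by omega
  have c1 : 2 * (B + 3*K).choose 2 = (n1+1) * n1 := by
    have := two_choose (B + 3*K); rw [hn1] at this ⊢
    simpa using this
  have c2 : 2 * (y-1-K).choose 2 = (z1+1) * z1 := by
    have := two_choose (y-1-K); rw [hz1] at this ⊢
    simpa using this
  have c3 : 2 * (y-1).choose 2 = ((z1+1+K)) * (z1+K) := by
    have := two_choose (y-1); rw [hw] at this ⊢
    have he : z1 + 1 + K - 1 = z1 + K := by omega
    rw [he] at this; omega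
  have ring1 : 17*((z1+1+K)*(z1+K)) = 17*((z1+1)*z1) + 17*(K*(2*z1+1+K)) := by ring
  have key : 9 * ((n1+1) * n1) ≤ 17*(K*(2*z1+1+K)) := by
    exact_mod_cast intIneqY (B:ℤ) (K:ℤ) (n1:ℤ) (z1:ℤ) (by exact_mod_cast hB)
      (by exact_mod_cast hK) (by exact_mod_cast hn1.symm) (by positivity)
      (by exact_mod_cast hz1b) (by positivity)
  omega

lemma toReal {C D : ℕ} (h : 9*C ≤ 17*D) {ε : ℝ} (hε : 0 < ε) :
    (9/17 - ε) * (C:ℝ) ≤ (D:ℝ) := by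
  have h' : (9:ℝ)*(C:ℝ) ≤ 17*(D:ℝ) := by exact_mod_cast h
  have hC : (0:ℝ) ≤ (C:ℝ) := Nat.cast_nonneg C
  nlinarith [mul_nonneg hε.le hC]


lemma notChrom {c : ℕ} (hc2 : 2^(2*c) < N) (hK0 : 0 < K) :
    ¬ ChromAtMost (G N K) c := by
  rintro ⟨f, hf⟩
  have hnn : 0 < nn N K := by unfold nn; omega
  rcases Nat.eq_zero_or_pos c with rfl | hcpos
  · exact (f ⟨0, hnn⟩).elim0
  have hN0 : 0 < N := by
    have := Nat.one_le_two_pow (n := 2*c)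
    omega
  set φ : Fin N → Fin N → Fin c := fun i j => f (wenc N K i j) with hφ
  have noMono : ∀ i j k l : Fin N, (i:ℕ) < j → (j:ℕ) < k → (k:ℕ) < l →
      ¬ (φ i j = φ j k ∧ φ j k = φ k l) := by
    rintro i j k l hij hjk hkl ⟨h1, h2⟩
    obtain ⟨x, hx, y, hy, hne⟩ := hf _ (edgeC hij hjk hkl)
    have hall : ∀ z ∈ ({wenc N K i j, wenc N K j k, wenc N K k l} :
        Finset (Fin (nn N K))), f z = φ i j := by
      intro z hz
      simp only [mem_insert, mem_singleton] at hz
      rcases hz with rfl | rfl | rfl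
      · rfl
      · exact h1.symm
      · exact (h1.trans h2).symm
    exact hne ((hall x hx).trans (hall y hy).symm)
  set bitB : Fin N → Fin N → Bool :=
    fun i j => decide (∃ l : Fin N, (j:ℕ) < l ∧ φ j l = φ i j) with hbitB
  set Ψ : Fin N → Fin N → Fin c × Bool := fun i j => (φ i j, bitB i j) with hΨdef
  set U : Fin N → Finset (Fin c × Bool) :=
    fun i => (Finset.univ.filter (fun j : Fin N => (i:ℕ) < (j:ℕ))).image (Ψ i) with hU
  have key : ∀ i j : Fin N, (i:ℕ) < (j:ℕ) → U i = U j → False := by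
    intro i j hij hUeq
    have h1 : Ψ i j ∈ U i := by
      rw [hU]
      exact mem_image_of_mem _ (mem_filter.mpr ⟨mem_univ _, hij⟩)
    rw [hUeq] at h1
    rw [hU] at h1
    obtain ⟨l, hl, hΨ⟩ := mem_image.mp h1
    have hl' : (j:ℕ) < (l:ℕ) := (mem_filter.mp hl).2
    have hφeq : φ j l = φ i j := congrArg Prod.fst hΨ
    have hbit : bitB j l = bitB i j := congrArg Prod.snd hΨ
    have hbi : bitB i j = true := by
      rw [hbitB]
      exact decide_eq_true ⟨l, hl', hφeq⟩
    rw [hbi] at hbit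
    have hex : ∃ m : Fin N, (l:ℕ) < (m:ℕ) ∧ φ l m = φ j l := by
      have := hbit
      rw [hbitB] at this
      exact of_decide_eq_true this
    obtain ⟨m, hm, hφ2⟩ := hex
    exact noMono i j l m hij hl' hm ⟨hφeq.symm, hφ2.symm⟩
  have Uinj : Function.Injective U := by
    intro i j hUeq
    by_contra hne
    have hne' : (i:ℕ) ≠ (j:ℕ) := fun h => hne (Fin.ext h)
    rcases Nat.lt_or_ge (i:ℕ) (j:ℕ) with h | h
    · exact key i j h hUeq
    · exact key j i (by omega) hUeq.symm
  have hcard := Fintype.card_le_of_injective U Uinj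
  rw [Fintype.card_fin, Fintype.card_finset, Fintype.card_prod, Fintype.card_fin,
    Fintype.card_bool] at hcard
  have : 2^(2*c) = 2^(c*2) := by rw [mul_comm]
  omega


/-- symmetric label condition satisfied by every edge of the construction -/
def SC (x y z : Fin 4) : Prop :=
  ((x ≠ 3 ∧ y ≠ 3 ∧ z ≠ 3) ∧ (x = 0 ∨ y = 0 ∨ z = 0) ∧
    (x = 1 ∨ x = 2 ∨ y = 1 ∨ y = 2 ∨ z = 1 ∨ z = 2))
  ∨ ((x = 3 ∧ y ≠ 3 ∧ z ≠ 3 ∧ y ≠ z) ∨ (y = 3 ∧ x ≠ 3 ∧ z ≠ 3 ∧ x ≠ z) ∨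
     (z = 3 ∧ x ≠ 3 ∧ y ≠ 3 ∧ x ≠ y))
  ∨ (x = 3 ∧ y = 3 ∧ z = 3)

instance (x y z : Fin 4) : Decidable (SC x y z) := by
  unfold SC; infer_instance

set_option maxHeartbeats 1000000 in
set_option synthInstance.maxSize 4000 in
set_option maxRecDepth 10000 in
theorem DEC : ∀ x0 x1 x2 x3 x4 x5 x6 : Fin 4,
    SC x0 x1 x2 → SC x0 x3 x4 → SC x0 x5 x6 →
    SC x1 x3 x5 → SC x1 x4 x6 → SC x2 x3 x6 →
    SC x2 x4 x5 → x0 = 3 ∧ x1 = 3 ∧ x2 = 3 ∧ x3 = 3 ∧ x4 = 3 ∧ x5 = 3 ∧ x6 = 3 := by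
  decide

/-- chain-permutation facts on (div, mod) data of three vertices -/
def CP6 (n1 m1 n2 m2 n3 m3 : ℕ) : Prop :=
  (m1 = n2 ∧ m2 = n3) ∨ (m1 = n3 ∧ m3 = n2) ∨ (m2 = n1 ∧ m1 = n3) ∨
  (m2 = n3 ∧ m3 = n1) ∨ (m3 = n1 ∧ m1 = n2) ∨ (m3 = n2 ∧ m2 = n1)

lemma CPfirst1 {n1 m1 n2 m2 n3 m3 : ℕ} (h : CP6 n1 m1 n2 m2 n3 m3)
    (o1 : n1 < m1) (o2 : n2 < m2) (o3 : n3 < m3) (le2 : n1 ≤ n2) (le3 : n1 ≤ n3) :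
    m1 = n2 ∨ m1 = n3 := by unfold CP6 at h; omega

lemma CPfirst2 {n1 m1 n2 m2 n3 m3 : ℕ} (h : CP6 n1 m1 n2 m2 n3 m3)
    (o1 : n1 < m1) (o2 : n2 < m2) (o3 : n3 < m3) (le1 : n2 ≤ n1) (le3 : n2 ≤ n3) :
    m2 = n1 ∨ m2 = n3 := by unfold CP6 at h; omega

lemma CPfirst3 {n1 m1 n2 m2 n3 m3 : ℕ} (h : CP6 n1 m1 n2 m2 n3 m3)
    (o1 : n1 < m1) (o2 : n2 < m2) (o3 : n3 < m3) (le1 : n3 ≤ n1) (le2 : n3 ≤ n2) :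
    m3 = n1 ∨ m3 = n2 := by unfold CP6 at h; omega

lemma CPne {n1 m1 n2 m2 n3 m3 : ℕ} (h : CP6 n1 m1 n2 m2 n3 m3)
    (o1 : n1 < m1) (o2 : n2 < m2) (o3 : n3 < m3) :
    n1 ≠ n2 ∧ n1 ≠ n3 ∧ n2 ≠ n3 := by unfold CP6 at h; omega

lemma chain_decode {u1 u2 u3 : ℕ} (h : chainS N {u1, u2, u3})
    (d12 : u1 ≠ u2) (d13 : u1 ≠ u3) (d23 : u2 ≠ u3) :
    CP6 (u1/N) (u1%N) (u2/N) (u2%N) (u3/N) (u3%N) := by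
  obtain ⟨i, j, k, l, hij, hjk, hkl, hset⟩ := h
  have dv : ∀ (u : ℕ) (a b : Fin N), u = (a:ℕ)*N+(b:ℕ) → u/N = (a:ℕ) ∧ u%N = (b:ℕ) := by
    intro u a b hu
    rw [hu]
    exact ⟨enc_div b.isLt, enc_mod b.isLt⟩
  have h1 : u1 ∈ ({(i:ℕ)*N+(j:ℕ), (j:ℕ)*N+(k:ℕ), (k:ℕ)*N+(l:ℕ)} : Finset ℕ) := by
    rw [← hset]; simp
  have h2 : u2 ∈ ({(i:ℕ)*N+(j:ℕ), (j:ℕ)*N+(k:ℕ), (k:ℕ)*N+(l:ℕ)} : Finset ℕ) := by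
    rw [← hset]; simp
  have h3 : u3 ∈ ({(i:ℕ)*N+(j:ℕ), (j:ℕ)*N+(k:ℕ), (k:ℕ)*N+(l:ℕ)} : Finset ℕ) := by
    rw [← hset]; simp
  simp only [mem_insert, mem_singleton] at h1 h2 h3
  unfold CP6
  rcases h1 with h1|h1|h1 <;> rcases h2 with h2|h2|h2 <;> rcases h3 with h3|h3|h3
  all_goals try (exfalso; omega)
  · obtain ⟨a1,b1⟩ := dv _ _ _ h1; obtain ⟨a2,b2⟩ := dv _ _ _ h2; obtain ⟨a3,b3⟩ := dv _ _ _ h3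
    exact Or.inl ⟨by omega, by omega⟩
  · obtain ⟨a1,b1⟩ := dv _ _ _ h1; obtain ⟨a2,b2⟩ := dv _ _ _ h2; obtain ⟨a3,b3⟩ := dv _ _ _ h3
    exact Or.inr (Or.inl ⟨by omega, by omega⟩)
  · obtain ⟨a1,b1⟩ := dv _ _ _ h1; obtain ⟨a2,b2⟩ := dv _ _ _ h2; obtain ⟨a3,b3⟩ := dv _ _ _ h3
    exact Or.inr (Or.inr (Or.inl ⟨by omega, by omega⟩))
  · obtain ⟨a1,b1⟩ := dv _ _ _ h1; obtain ⟨a2,b2⟩ := dv _ _ _ h2; obtain ⟨a3,b3⟩ := dv _ _ _ h3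
    exact Or.inr (Or.inr (Or.inr (Or.inr (Or.inl ⟨by omega, by omega⟩))))
  · obtain ⟨a1,b1⟩ := dv _ _ _ h1; obtain ⟨a2,b2⟩ := dv _ _ _ h2; obtain ⟨a3,b3⟩ := dv _ _ _ h3
    exact Or.inr (Or.inr (Or.inr (Or.inl ⟨by omega, by omega⟩)))
  · obtain ⟨a1,b1⟩ := dv _ _ _ h1; obtain ⟨a2,b2⟩ := dv _ _ _ h2; obtain ⟨a3,b3⟩ := dv _ _ _ h3
    exact Or.inr (Or.inr (Or.inr (Or.inr (Or.inr ⟨by omega, by omega⟩))))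

lemma lineFact {x y z : Fin (nn N K)} (hxy : x ≠ y) (hxz : x ≠ z) (hyz : y ≠ z)
    (h : ({x,y,z} : Finset (Fin (nn N K))) ∈ G N K) :
    SC (lab N K x) (lab N K y) (lab N K z) ∧
      (lab N K x = 3 → lab N K y = 3 → lab N K z = 3 →
        chainS N {(x:ℕ), (y:ℕ), (z:ℕ)}) := by
  rw [mem_G_iff] at h
  obtain ⟨-, hc⟩ := h
  have hfil := filt3 (fun v => lab N K v = 3) hxy hxz hyz
  rcases hc with ⟨h0, ⟨v, hv, hv0⟩, ⟨u, hu, hu12⟩⟩ | ⟨h1, a, ha, b, hb, h3a, h3b, hab⟩ |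
    ⟨h3, hch⟩
  · have hx3 : lab N K x ≠ 3 := by intro hh; rw [hfil, if_pos hh] at h0; omega
    have hy3 : lab N K y ≠ 3 := by intro hh; rw [hfil, if_pos hh] at h0; omega
    have hz3 : lab N K z ≠ 3 := by intro hh; rw [hfil, if_pos hh] at h0; omega
    constructor
    · refine Or.inl ⟨⟨hx3, hy3, hz3⟩, ?_, ?_⟩
      · simp only [mem_insert, mem_singleton] at hv
        rcases hv with rfl | rfl | rfl
        exacts [Or.inl hv0, Or.inr (Or.inl hv0), Or.inr (Or.inr hv0)]
      · simp only [mem_insert, mem_singleton] at hu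
        rcases hu with rfl | rfl | rfl
        · rcases hu12 with h | h
          exacts [Or.inl h, Or.inr (Or.inl h)]
        · rcases hu12 with h | h
          exacts [Or.inr (Or.inr (Or.inl h)), Or.inr (Or.inr (Or.inr (Or.inl h)))]
        · rcases hu12 with h | h
          exacts [Or.inr (Or.inr (Or.inr (Or.inr (Or.inl h)))),
            Or.inr (Or.inr (Or.inr (Or.inr (Or.inr h))))]
    · intro p1 _ _
      exact absurd p1 hx3
  · -- exactly one label 3
    simp only [mem_insert, mem_singleton] at ha hb
    by_cases hx3 : lab N K x = 3
    · have hy3 : lab N K y ≠ 3 := by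
        intro hh; rw [hfil, if_pos hx3, if_pos hh] at h1; omega
      have hz3 : lab N K z ≠ 3 := by
        intro hh; rw [hfil, if_pos hx3, if_pos hh] at h1; omega
      have hax : a ≠ x := fun hh => h3a (hh ▸ hx3)
      have hbx : b ≠ x := fun hh => h3b (hh ▸ hx3)
      have hyzlab : lab N K y ≠ lab N K z := by
        rcases ha with rfl | rfl | rfl
        · exact absurd rfl hax
        · rcases hb with rfl | rfl | rfl
          · exact absurd rfl hbx
          · exact absurd rfl hab
          · exact hab
        · rcases hb with rfl | rfl | rfl
          · exact absurd rfl hbx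
          · exact fun hh => hab hh.symm
          · exact absurd rfl hab
      refine ⟨Or.inr (Or.inl (Or.inl ⟨hx3, hy3, hz3, hyzlab⟩)), fun _ p2 _ => absurd p2 hy3⟩
    · by_cases hy3 : lab N K y = 3
      · have hz3 : lab N K z ≠ 3 := by
          intro hh; rw [hfil, if_neg hx3, if_pos hy3, if_pos hh] at h1; omega
        have hay : a ≠ y := fun hh => h3a (hh ▸ hy3)
        have hby : b ≠ y := fun hh => h3b (hh ▸ hy3)
        have hxzlab : lab N K x ≠ lab N K z := by
          rcases ha with rfl | rfl | rfl
          · rcases hb with rfl | rfl | rfl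
            · exact absurd rfl hab
            · exact absurd rfl hby
            · exact hab
          · exact absurd rfl hay
          · rcases hb with rfl | rfl | rfl
            · exact fun hh => hab hh.symm
            · exact absurd rfl hby
            · exact absurd rfl hab
        refine ⟨Or.inr (Or.inl (Or.inr (Or.inl ⟨hy3, hx3, hz3, hxzlab⟩))),
          fun p1 _ _ => absurd p1 hx3⟩
      · have hz3 : lab N K z = 3 := by
          by_contra hh
          rw [hfil, if_neg hx3, if_neg hy3, if_neg hh] at h1; omega
        have haz : a ≠ z := fun hh => h3a (hh ▸ hz3)
        have hbz : b ≠ z := fun hh => h3b (hh ▸ hz3)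
        have hxylab : lab N K x ≠ lab N K y := by
          rcases ha with rfl | rfl | rfl
          · rcases hb with rfl | rfl | rfl
            · exact absurd rfl hab
            · exact hab
            · exact absurd rfl hbz
          · rcases hb with rfl | rfl | rfl
            · exact fun hh => hab hh.symm
            · exact absurd rfl hab
            · exact absurd rfl hbz
          · exact absurd rfl haz
        refine ⟨Or.inr (Or.inl (Or.inr (Or.inr ⟨hz3, hx3, hy3, hxylab⟩))),
          fun p1 _ _ => absurd p1 hx3⟩
  · -- all three labels 3
    have hfull : ({x,y,z} : Finset (Fin (nn N K))).filter (fun v => lab N K v = 3)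
        = {x,y,z} :=
      Finset.eq_of_subset_of_card_le (filter_subset _ _)
        (by rw [card3 hxy hxz hyz, h3])
    have hx3 : lab N K x = 3 := by
      have hm : x ∈ ({x,y,z} : Finset (Fin (nn N K))).filter (fun v => lab N K v = 3) := by
        rw [hfull]; simp
      exact (mem_filter.mp hm).2
    have hy3 : lab N K y = 3 := by
      have hm : y ∈ ({x,y,z} : Finset (Fin (nn N K))).filter (fun v => lab N K v = 3) := by
        rw [hfull]; simp
      exact (mem_filter.mp hm).2
    have hz3 : lab N K z = 3 := by
      have hm : z ∈ ({x,y,z} : Finset (Fin (nn N K))).filter (fun v => lab N K v = 3) := by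
        rw [hfull]; simp
      exact (mem_filter.mp hm).2
    refine ⟨Or.inr (Or.inr ⟨hx3, hy3, hz3⟩), fun _ _ _ => ?_⟩
    rw [image_insert, image_insert, image_singleton] at hch
    exact hch


lemma notEmbeds : ¬ Embeds Fano (G N K) := by
  rintro ⟨f, finj, hf⟩
  have fd : ∀ a b : Fin 7, a ≠ b → f a ≠ f b := fun a b hab => finj.ne hab
  have E012 : ({f 0, f 1, f 2} : Finset (Fin (nn N K))) ∈ G N K := by
    have h := hf {0,1,2} (by decide)
    simpa [Finset.image_insert, Finset.image_singleton] using h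
  have E034 : ({f 0, f 3, f 4} : Finset (Fin (nn N K))) ∈ G N K := by
    have h := hf {0,3,4} (by decide)
    simpa [Finset.image_insert, Finset.image_singleton] using h
  have E056 : ({f 0, f 5, f 6} : Finset (Fin (nn N K))) ∈ G N K := by
    have h := hf {0,5,6} (by decide)
    simpa [Finset.image_insert, Finset.image_singleton] using h
  have E135 : ({f 1, f 3, f 5} : Finset (Fin (nn N K))) ∈ G N K := by
    have h := hf {1,3,5} (by decide)
    simpa [Finset.image_insert, Finset.image_singleton] using h
  have E146 : ({f 1, f 4, f 6} : Finset (Fin (nn N K))) ∈ G N K := by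
    have h := hf {1,4,6} (by decide)
    simpa [Finset.image_insert, Finset.image_singleton] using h
  have E236 : ({f 2, f 3, f 6} : Finset (Fin (nn N K))) ∈ G N K := by
    have h := hf {2,3,6} (by decide)
    simpa [Finset.image_insert, Finset.image_singleton] using h
  have E245 : ({f 2, f 4, f 5} : Finset (Fin (nn N K))) ∈ G N K := by
    have h := hf {2,4,5} (by decide)
    simpa [Finset.image_insert, Finset.image_singleton] using h
  have L012 := lineFact (fd 0 1 (by decide)) (fd 0 2 (by decide)) (fd 1 2 (by decide)) E012
  have L034 := lineFact (fd 0 3 (by decide)) (fd 0 4 (by decide)) (fd 3 4 (by decide)) E034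
  have L056 := lineFact (fd 0 5 (by decide)) (fd 0 6 (by decide)) (fd 5 6 (by decide)) E056
  have L135 := lineFact (fd 1 3 (by decide)) (fd 1 5 (by decide)) (fd 3 5 (by decide)) E135
  have L146 := lineFact (fd 1 4 (by decide)) (fd 1 6 (by decide)) (fd 4 6 (by decide)) E146
  have L236 := lineFact (fd 2 3 (by decide)) (fd 2 6 (by decide)) (fd 3 6 (by decide)) E236
  have L245 := lineFact (fd 2 4 (by decide)) (fd 2 5 (by decide)) (fd 4 5 (by decide)) E245
  obtain ⟨g0, g1, g2, g3, g4, g5, g6⟩ :=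
    DEC (lab N K (f 0)) (lab N K (f 1)) (lab N K (f 2)) (lab N K (f 3)) (lab N K (f 4))
      (lab N K (f 5)) (lab N K (f 6)) L012.1 L034.1 L056.1 L135.1 L146.1 L236.1 L245.1
  have C012 := L012.2 g0 g1 g2
  have C034 := L034.2 g0 g3 g4
  have C056 := L056.2 g0 g5 g6
  have C135 := L135.2 g1 g3 g5
  have C146 := L146.2 g1 g4 g6
  have C236 := L236.2 g2 g3 g6
  have C245 := L245.2 g2 g4 g5
  have vd : ∀ a b : Fin 7, a ≠ b → ((f a : ℕ) ≠ (f b : ℕ)) :=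
    fun a b hab h => fd a b hab (Fin.ext h)
  have P012 := chain_decode C012 (vd 0 1 (by decide)) (vd 0 2 (by decide)) (vd 1 2 (by decide))
  have P034 := chain_decode C034 (vd 0 3 (by decide)) (vd 0 4 (by decide)) (vd 3 4 (by decide))
  have P056 := chain_decode C056 (vd 0 5 (by decide)) (vd 0 6 (by decide)) (vd 5 6 (by decide))
  have P135 := chain_decode C135 (vd 1 3 (by decide)) (vd 1 5 (by decide)) (vd 3 5 (by decide))
  have P146 := chain_decode C146 (vd 1 4 (by decide)) (vd 1 6 (by decide)) (vd 4 6 (by decide))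
  have P236 := chain_decode C236 (vd 2 3 (by decide)) (vd 2 6 (by decide)) (vd 3 6 (by decide))
  have P245 := chain_decode C245 (vd 2 4 (by decide)) (vd 2 5 (by decide)) (vd 4 5 (by decide))
  have o0 : ((f 0 : Fin (nn N K)) : ℕ)/N < ((f 0 : Fin (nn N K)) : ℕ)%N := (lab_eq3_iff.mp g0).2
  have o1 : ((f 1 : Fin (nn N K)) : ℕ)/N < ((f 1 : Fin (nn N K)) : ℕ)%N := (lab_eq3_iff.mp g1).2
  have o2 : ((f 2 : Fin (nn N K)) : ℕ)/N < ((f 2 : Fin (nn N K)) : ℕ)%N := (lab_eq3_iff.mp g2).2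
  have o3 : ((f 3 : Fin (nn N K)) : ℕ)/N < ((f 3 : Fin (nn N K)) : ℕ)%N := (lab_eq3_iff.mp g3).2
  have o4 : ((f 4 : Fin (nn N K)) : ℕ)/N < ((f 4 : Fin (nn N K)) : ℕ)%N := (lab_eq3_iff.mp g4).2
  have o5 : ((f 5 : Fin (nn N K)) : ℕ)/N < ((f 5 : Fin (nn N K)) : ℕ)%N := (lab_eq3_iff.mp g5).2
  have o6 : ((f 6 : Fin (nn N K)) : ℕ)/N < ((f 6 : Fin (nn N K)) : ℕ)%N := (lab_eq3_iff.mp g6).2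
  obtain ⟨p0, -, hmin'⟩ := Finset.exists_min_image (Finset.univ : Finset (Fin 7))
    (fun p => ((f p : Fin (nn N K)) : ℕ)/N) ⟨0, mem_univ 0⟩
  have hmin : ∀ q : Fin 7, ((f p0 : Fin (nn N K)) : ℕ)/N ≤ ((f q : Fin (nn N K)) : ℕ)/N :=
    fun q => hmin' q (mem_univ q)
  have h7 : ∀ q : Fin 7, q = 0 ∨ q = 1 ∨ q = 2 ∨ q = 3 ∨ q = 4 ∨ q = 5 ∨ q = 6 := by decide
  rcases h7 p0 with rfl | rfl | rfl | rfl | rfl | rfl | rfl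
  · rcases CPfirst1 P012 o0 o1 o2 (hmin 1) (hmin 2) with h1 | h1 <;>
      rcases CPfirst1 P034 o0 o3 o4 (hmin 3) (hmin 4) with h2 | h2
    · have := CPne P135 o1 o3 o5; omega
    · have := CPne P146 o1 o4 o6; omega
    · have := CPne P236 o2 o3 o6; omega
    · have := CPne P245 o2 o4 o5; omega
  · rcases CPfirst2 P012 o0 o1 o2 (hmin 0) (hmin 2) with h1 | h1 <;>
      rcases CPfirst1 P135 o1 o3 o5 (hmin 3) (hmin 5) with h2 | h2
    · have := CPne P034 o0 o3 o4; omega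
    · have := CPne P056 o0 o5 o6; omega
    · have := CPne P236 o2 o3 o6; omega
    · have := CPne P245 o2 o4 o5; omega
  · rcases CPfirst3 P012 o0 o1 o2 (hmin 0) (hmin 1) with h1 | h1 <;>
      rcases CPfirst1 P236 o2 o3 o6 (hmin 3) (hmin 6) with h2 | h2
    · have := CPne P034 o0 o3 o4; omega
    · have := CPne P056 o0 o5 o6; omega
    · have := CPne P135 o1 o3 o5; omega
    · have := CPne P146 o1 o4 o6; omega
  · rcases CPfirst2 P034 o0 o3 o4 (hmin 0) (hmin 4) with h1 | h1 <;>
      rcases CPfirst2 P135 o1 o3 o5 (hmin 1) (hmin 5) with h2 | h2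
    · have := CPne P012 o0 o1 o2; omega
    · have := CPne P056 o0 o5 o6; omega
    · have := CPne P146 o1 o4 o6; omega
    · have := CPne P245 o2 o4 o5; omega
  · rcases CPfirst3 P034 o0 o3 o4 (hmin 0) (hmin 3) with h1 | h1 <;>
      rcases CPfirst2 P146 o1 o4 o6 (hmin 1) (hmin 6) with h2 | h2
    · have := CPne P012 o0 o1 o2; omega
    · have := CPne P056 o0 o5 o6; omega
    · have := CPne P135 o1 o3 o5; omega
    · have := CPne P236 o2 o3 o6; omega
  · rcases CPfirst2 P056 o0 o5 o6 (hmin 0) (hmin 6) with h1 | h1 <;>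
      rcases CPfirst3 P135 o1 o3 o5 (hmin 1) (hmin 3) with h2 | h2
    · have := CPne P012 o0 o1 o2; omega
    · have := CPne P034 o0 o3 o4; omega
    · have := CPne P146 o1 o4 o6; omega
    · have := CPne P236 o2 o3 o6; omega
  · rcases CPfirst3 P056 o0 o5 o6 (hmin 0) (hmin 5) with h1 | h1 <;>
      rcases CPfirst3 P146 o1 o4 o6 (hmin 1) (hmin 4) with h2 | h2
    · have := CPne P012 o0 o1 o2; omega
    · have := CPne P034 o0 o3 o4; omega
    · have := CPne P135 o1 o3 o5; omega
    · have := CPne P245 o2 o4 o5; omega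

end FanoCT

/-- Proposition: the chromatic threshold of the family of `S(7)`-free `3`-uniform
hypergraphs is at least `9/17`: for every `t ≥ 2` and `ε > 0`, there exist arbitrarily large
`S(7)`-free `3`-uniform hypergraphs `G` with `χ(G) ≥ t` (i.e. not `(t-1)`-colorable) and
minimum degree at least `(9/17 - ε)·C(n, 2)`. -/
theorem fano_chromatic_threshold_lower_bound
    (t : ℕ) (ht : 2 ≤ t) (ε : ℝ) (hε : 0 < ε) (N₀ : ℕ) :
    ∃ n : ℕ, N₀ ≤ n ∧ ∃ G : Finset (Finset (Fin n)),
      (∀ e ∈ G, e.card = 3) ∧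
      ¬ Embeds Fano G ∧
      ¬ ChromAtMost G (t - 1) ∧
      (∀ v : Fin n, (9 / 17 - ε) * (n.choose 2 : ℝ) ≤ ((G.filter (fun e => v ∈ e)).card : ℝ)) := by

  classical
  set N : ℕ := 3 * 4^t with hNdef
  have h4t : 1 ≤ 4^t := Nat.one_le_pow _ _ (by norm_num)
  have hN9 : 9 ≤ N*N := by
    have : 3 ≤ N := by rw [hNdef]; omega
    nlinarith
  have hN3 : N % 3 = 0 := by
    rw [hNdef]; omega
  set K : ℕ := 10000*(N*N) + N₀ with hKdef
  have hKge : 10000*(N*N) ≤ K := by omega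
  have hnn : FanoCT.nn N K = N*N + 3*K := rfl
  refine ⟨FanoCT.nn N K, by rw [hnn]; omega, FanoCT.G N K, ?_, ?_, ?_, ?_⟩
  · intro e he
    exact (FanoCT.mem_G_iff.mp he).1
  · exact FanoCT.notEmbeds
  · apply FanoCT.notChrom
    · -- 2^(2*(t-1)) < N
      have he1 : 2^(2*(t-1)) = 4^(t-1) := by
        rw [pow_mul]
        norm_num
      have he2 : 4^(t-1) ≤ 4^t := Nat.pow_le_pow_right (by norm_num) (by omega)
      have he3 : 4^t < 3*4^t := by omega
      rw [he1, hNdef]; omega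
    · omega
  · intro v
    by_cases h3 : FanoCT.lab N K v = 3
    · have hd := FanoCT.degW hN3 h3
      have ha := FanoCT.arithW hN9 hKge
      have hch : (FanoCT.nn N K).choose 2 = (N*N+3*K).choose 2 := rfl
      have hcomb : 9 * (FanoCT.nn N K).choose 2
          ≤ 17 * ((FanoCT.G N K).filter (fun e => v ∈ e)).card := by
        omega
      exact FanoCT.toReal hcomb hε
    · have hd := FanoCT.degY hN3 h3
      have hy := FanoCT.card_Y_lb (N := N) (K := K)
      have ha := FanoCT.arithY (y := (FanoCT.Yset N K).card) hN9 hKge hy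
      have hch : (FanoCT.nn N K).choose 2 = (N*N+3*K).choose 2 := rfl
      have hcomb : 9 * (FanoCT.nn N K).choose 2
          ≤ 17 * ((FanoCT.G N K).filter (fun e => v ∈ e)).card := by
        omega
      exact FanoCT.toReal hcomb hε
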